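/- Let J = (J_1 > J_2 > … > J_k) be a strictly decreasing integer vector with J_1 − J_k < n, and let J^{(n)} be the unique element of B_{k,n} such that the set of residues {J^{(n)}_i mod n : 1 ≤ i ≤ k} equals {J_i mod n : 1 ≤ i ≤ k}. Then for every function μ: B_{k,n} → ℂ: (1/n^k) · Σ_{I∈B_{k,n}} μ(I) · |V(ξ_n(I))|² · S_J(ξ_n(I)) = S_J(ξ_n(I_0)) · Σ_{I∈B_{k,n}} ( |V(ξ_n(I))| · |V(ξ_n(I_0))| / n^k ) · S_I(ξ_n(J^{(n)})) · μ(I). (The left-hand side is the continuous Fourier transform Φ[ξ_n(μ)](J) on the unitary group U(k), and the sum on the right is the discrete Fourier transform Φ_n[μ](J^{(n)}) on B_{k,n}.) -/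

import Mathlib

noncomputable section
open Finset
namespace Paper

def aJ (k : ℕ) (J : Fin k → ℤ) (u : Fin k → ℝ) : ℂ :=
  Matrix.det (Matrix.of fun l m : Fin k => Complex.exp (Complex.I * (u l : ℂ) * (J m : ℂ)))

def I0 (k : ℕ) : Fin k → ℤ := fun i => (k : ℤ) - 1 - (i : ℤ)

def Vdm (k : ℕ) (u : Fin k → ℝ) : ℂ := aJ k (I0 k) u

def SJ (k : ℕ) (J : Fin k → ℤ) (u : Fin k → ℝ) : ℂ := aJ k J u / Vdm k u

def xi (k n : ℕ) (I : Fin k → ℤ) : Fin k → ℝ :=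
  fun j => (2 * Real.pi / (n : ℝ)) * ((I j : ℝ) - ((k : ℝ) - 1) / 2)

abbrev Conf (k n : ℕ) := {I : Fin k → Fin n // ∀ i j : Fin k, i < j → I j < I i}

def cv {k n : ℕ} (I : Conf k n) : Fin k → ℤ := fun i => ((I.val i : ℕ) : ℤ)

-- auxiliary definitions
def om (n : ℕ) : ℂ := ((Real.pi / n : ℝ) : ℂ)

def Emat (k n : ℕ) (X Y : Fin k → ℤ) : ℂ :=
  Matrix.det (Matrix.of fun l m : Fin k =>
    Complex.exp (Complex.I * (2 * om n) * (X l : ℂ) * (Y m : ℂ)))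

def sig (k : ℕ) (X : Fin k → ℤ) : ℂ := ∑ i, (X i : ℂ)

def Kc (k : ℕ) : ℕ := ∑ i : Fin k, (Finset.Ioi i).card

def wconst (k : ℕ) : ℂ :=
  (((Equiv.Perm.sign (Fin.revPerm : Equiv.Perm (Fin k))) : ℤ) : ℂ) * (-Complex.I) ^ Kc k

lemma wconst_abs (k : ℕ) : ‖wconst k‖ = 1 := by
  unfold wconst
  rcases Int.units_eq_one_or (Equiv.Perm.sign (Fin.revPerm : Equiv.Perm (Fin k))) with h | h <;>
    simp [h, map_mul, map_pow]

lemma wconst_ne (k : ℕ) : wconst k ≠ 0 := by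
  intro h
  have := wconst_abs k
  rw [h] at this; simp at this

lemma aJ_xi (k n : ℕ) (X Y : Fin k → ℤ) :
    aJ k Y (xi k n X) =
      Complex.exp (-(Complex.I * om n * ((k : ℂ) - 1) * sig k Y)) * Emat k n X Y := by
  unfold aJ Emat
  have h : (Matrix.of fun l m : Fin k => Complex.exp (Complex.I * ((xi k n X l : ℝ) : ℂ) * (Y m : ℂ)))
      = Matrix.of fun l m : Fin k =>
          (fun m : Fin k => Complex.exp (-(Complex.I * om n * ((k : ℂ) - 1) * (Y m : ℂ)))) m *
          (Matrix.of fun l m : Fin k =>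
            Complex.exp (Complex.I * (2 * om n) * (X l : ℂ) * (Y m : ℂ))) l m := by
    ext l m
    simp only [Matrix.of_apply]
    rw [← Complex.exp_add]
    congr 1
    unfold xi om
    push_cast
    ring
  rw [h, Matrix.det_mul_row]
  congr 1
  rw [← Complex.exp_sum]
  congr 1
  unfold sig
  rw [Finset.mul_sum, ← Finset.sum_neg_distrib]

lemma Emat_symm (k n : ℕ) (X Y : Fin k → ℤ) : Emat k n X Y = Emat k n Y X := by
  unfold Emat
  rw [← Matrix.det_transpose]
  congr 1
  ext l m
  simp only [Matrix.transpose_apply, Matrix.of_apply]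
  congr 1
  ring

lemma Emat_perm (k n : ℕ) (σ : Equiv.Perm (Fin k)) (X Y Y' : Fin k → ℤ)
    (hn : n ≠ 0)
    (hY : ∀ m, ∃ t : ℤ, Y m = Y' (σ m) + n * t) :
    Emat k n X Y = (((Equiv.Perm.sign σ : ℤ)) : ℂ) * Emat k n X Y' := by
  have hom : om n * n = (Real.pi : ℂ) := by
    unfold om
    push_cast
    rw [div_mul_cancel₀]
    exact Nat.cast_ne_zero.mpr hn
  have hentry : ∀ l m, Complex.exp (Complex.I * (2 * om n) * (X l : ℂ) * (Y m : ℂ))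
      = Complex.exp (Complex.I * (2 * om n) * (X l : ℂ) * (Y' (σ m) : ℂ)) := by
    intro l m
    obtain ⟨t, ht⟩ := hY m
    have harg : Complex.I * (2 * om n) * (X l : ℂ) * (Y m : ℂ)
        = Complex.I * (2 * om n) * (X l : ℂ) * (Y' (σ m) : ℂ) + ((X l * t : ℤ) : ℂ) * (2 * (Real.pi : ℂ) * Complex.I) := by
      rw [ht]
      push_cast
      linear_combination (2 * Complex.I * (X l : ℂ) * (t : ℂ)) * hom
    rw [harg, Complex.exp_add, Complex.exp_int_mul_two_pi_mul_I, mul_one]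
  unfold Emat
  have h : (Matrix.of fun l m : Fin k =>
      Complex.exp (Complex.I * (2 * om n) * (X l : ℂ) * (Y m : ℂ)))
      = (Matrix.of fun l m : Fin k =>
          Complex.exp (Complex.I * (2 * om n) * (X l : ℂ) * (Y' m : ℂ))).submatrix id σ := by
    ext l m
    simp only [Matrix.submatrix_apply, Matrix.of_apply, id]
    exact hentry l m
  rw [h, Matrix.det_permute']


lemma exp_sub_exp (a b : ℝ) :
    Complex.exp (Complex.I * a) - Complex.exp (Complex.I * b) =
      Complex.exp (Complex.I * (((a + b) / 2 : ℝ) : ℂ)) * (2 * Complex.I) *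
        ((Real.sin ((a - b) / 2) : ℝ) : ℂ) := by
  have h1 : Complex.exp (Complex.I * (((a + b) / 2 : ℝ) : ℂ)) *
      Complex.exp (-((((a - b) / 2 : ℝ) : ℂ)) * Complex.I) = Complex.exp (Complex.I * b) := by
    rw [← Complex.exp_add]; congr 1; push_cast; ring
  have h2 : Complex.exp (Complex.I * (((a + b) / 2 : ℝ) : ℂ)) *
      Complex.exp ((((a - b) / 2 : ℝ) : ℂ) * Complex.I) = Complex.exp (Complex.I * a) := by
    rw [← Complex.exp_add]; congr 1; push_cast; ring
  rw [Complex.ofReal_sin, Complex.sin]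
  linear_combination h1 - h2 - (Complex.exp (Complex.I * (((a + b) / 2 : ℝ) : ℂ)) *
    (Complex.exp (-((((a - b) / 2 : ℝ) : ℂ)) * Complex.I) -
      Complex.exp ((((a - b) / 2 : ℝ) : ℂ) * Complex.I))) * Complex.I_sq

lemma sum_pairs (k : ℕ) (f : Fin k → ℝ) :
    ∑ i : Fin k, ∑ j ∈ Ioi i, (f i + f j) = ((k : ℝ) - 1) * ∑ i : Fin k, f i := by
  rcases Nat.eq_zero_or_pos k with hk | hk
  · subst hk; simp
  have hswap : ∑ i : Fin k, ∑ j ∈ Ioi i, f j = ∑ j : Fin k, ∑ _i ∈ Iio j, f j := by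
    refine Finset.sum_comm' ?_
    intro x y
    simp only [Finset.mem_univ, Finset.mem_Ioi, Finset.mem_Iio, true_and, and_true]
  have expand : ∑ i : Fin k, ∑ j ∈ Ioi i, (f i + f j)
      = ∑ i : Fin k, ((Finset.Ioi i).card • f i + (Finset.Iio i).card • f i) := by
    calc ∑ i : Fin k, ∑ j ∈ Ioi i, (f i + f j)
        = ∑ i : Fin k, ((∑ _j ∈ Ioi i, f i) + ∑ j ∈ Ioi i, f j) :=
          Finset.sum_congr rfl (fun i _ => Finset.sum_add_distrib)
      _ = (∑ i : Fin k, ∑ _j ∈ Ioi i, f i) + ∑ i : Fin k, ∑ j ∈ Ioi i, f j :=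
          Finset.sum_add_distrib
      _ = (∑ i : Fin k, (Finset.Ioi i).card • f i) + ∑ j : Fin k, (Finset.Iio j).card • f j := by
          rw [hswap]
          congr 1 <;> exact Finset.sum_congr rfl fun i _ => Finset.sum_const _
      _ = ∑ i : Fin k, ((Finset.Ioi i).card • f i + (Finset.Iio i).card • f i) :=
          Finset.sum_add_distrib.symm
  rw [expand, Finset.mul_sum]
  refine Finset.sum_congr rfl fun i _ => ?_
  rw [Fin.card_Ioi, Fin.card_Iio, ← add_nsmul]
  have hc : k - 1 - (i : ℕ) + (i : ℕ) = k - 1 := by omega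
  rw [hc, nsmul_eq_mul]
  congr 1
  have : (1 : ℕ) ≤ k := hk
  push_cast [Nat.cast_sub this]
  ring

lemma sum_xi (k n : ℕ) (X : Fin k → ℤ) :
    ∑ i : Fin k, xi k n X i
      = 2 * Real.pi / n * ((∑ i : Fin k, (X i : ℝ)) - k * ((k : ℝ) - 1) / 2) := by
  unfold xi
  rw [← Finset.mul_sum, Finset.sum_sub_distrib, Finset.sum_const]
  congr 1
  simp [Finset.card_univ]
  ring

theorem Vdm_phase (k n : ℕ) (hn : 0 < n) (X : Fin k → ℤ)
    (hdec : ∀ i j : Fin k, i < j → X j < X i) (h0 : ∀ i, 0 ≤ X i) (hlt : ∀ i, X i < n) :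
    Vdm k (xi k n X) = wconst k *
      Complex.exp (Complex.I * om n * (((k : ℂ) - 1) * sig k X - k * ((k : ℂ) - 1) ^ 2 / 2)) *
      ((‖Vdm k (xi k n X)‖ : ℝ) : ℂ) ∧ Vdm k (xi k n X) ≠ 0 := by
  have hnR : (0 : ℝ) < n := by exact_mod_cast hn
  set u := xi k n X with hu
  -- Step 1 : Vandermonde factorization
  have hV1 : Vdm k u = (((Equiv.Perm.sign (Fin.revPerm : Equiv.Perm (Fin k))) : ℤ) : ℂ) *
      ∏ i : Fin k, ∏ j ∈ Ioi i,
        (Complex.exp (Complex.I * u j) - Complex.exp (Complex.I * u i)) := by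
    unfold Vdm aJ
    have hM : (Matrix.of fun l m : Fin k =>
        Complex.exp (Complex.I * (u l : ℂ) * ((I0 k m : ℤ) : ℂ)))
        = (Matrix.vandermonde fun l => Complex.exp (Complex.I * u l)).submatrix id
            (Fin.revPerm : Equiv.Perm (Fin k)) := by
      ext l m
      simp only [Matrix.submatrix_apply, Matrix.of_apply, Matrix.vandermonde_apply, id]
      rw [← Complex.exp_nat_mul]
      congr 1
      have hval : ((Fin.revPerm m : Fin k) : ℕ) = k - ((m : ℕ) + 1) := by
        simp [Fin.revPerm_apply, Fin.rev]
      rw [hval]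
      have hm1 : (m : ℕ) + 1 ≤ k := m.isLt
      have hcast : ((k - ((m : ℕ) + 1) : ℕ) : ℂ) = (k : ℂ) - ((m : ℕ) : ℂ) - 1 := by
        push_cast [Nat.cast_sub hm1]
        ring
      rw [hcast]
      unfold I0
      push_cast
      ring
    rw [hM, Matrix.det_permute', Matrix.det_vandermonde]
  -- Step 2 : positivity of the sines
  have hsin : ∀ i j : Fin k, i < j → 0 < Real.sin ((u i - u j) / 2) := by
    intro i j hij
    have hx : X j < X i := hdec i j hij
    have hdpos : (0 : ℝ) < (X i : ℝ) - (X j : ℝ) := by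
      have : (X j : ℝ) < (X i : ℝ) := by exact_mod_cast hx
      linarith
    have hdlt : (X i : ℝ) - (X j : ℝ) < n := by
      have h1 : (X i : ℝ) < n := by exact_mod_cast hlt i
      have h2 : (0 : ℝ) ≤ (X j : ℝ) := by exact_mod_cast h0 j
      linarith
    have hform : (u i - u j) / 2 = Real.pi / n * ((X i : ℝ) - (X j : ℝ)) := by
      show (xi k n X i - xi k n X j) / 2 = _
      unfold xi
      field_simp
      ring
    apply Real.sin_pos_of_pos_of_lt_pi
    · rw [hform]
      have : 0 < Real.pi / n := by positivity
      exact mul_pos this hdpos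
    · rw [hform]
      have hlt' : Real.pi / n * ((X i : ℝ) - (X j : ℝ)) < Real.pi / n * n :=
        mul_lt_mul_of_pos_left hdlt (by positivity)
      have : Real.pi / n * n = Real.pi := by field_simp
      linarith [hlt', this.symm.le]
  -- Step 3 : assemble
  set Rr : ℝ := ∏ i : Fin k, ∏ j ∈ Ioi i, (2 * Real.sin ((u i - u j) / 2)) with hRr
  have hRpos : 0 < Rr := by
    refine Finset.prod_pos fun i _ => Finset.prod_pos fun j hj => ?_
    have := hsin i j (Finset.mem_Ioi.mp hj)
    linarith
  set rr : ℝ := ∑ i : Fin k, ∑ j ∈ Ioi i, (u i + u j) / 2 with hrr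
  have hV2 : Vdm k u = wconst k * Complex.exp (Complex.I * ((rr : ℝ) : ℂ)) * ((Rr : ℝ) : ℂ) := by
    rw [hV1]
    have hprod : (∏ i : Fin k, ∏ j ∈ Ioi i,
        (Complex.exp (Complex.I * u j) - Complex.exp (Complex.I * u i)))
        = ∏ i : Fin k, ∏ j ∈ Ioi i,
            ((-Complex.I) * (Complex.exp (Complex.I * (((u i + u j) / 2 : ℝ) : ℂ)) *
              ((2 * Real.sin ((u i - u j) / 2) : ℝ) : ℂ))) := by
      refine Finset.prod_congr rfl fun i _ => Finset.prod_congr rfl fun j hj => ?_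
      have hij : i < j := Finset.mem_Ioi.mp hj
      have h := exp_sub_exp (u i) (u j)
      push_cast at h ⊢
      linear_combination -h
    rw [hprod]
    simp only [Finset.prod_mul_distrib, Finset.prod_const]
    rw [Finset.prod_pow_eq_pow_sum]
    have hexpprod : (∏ i : Fin k, ∏ j ∈ Ioi i,
        Complex.exp (Complex.I * (((u i + u j) / 2 : ℝ) : ℂ)))
        = Complex.exp (Complex.I * ((rr : ℝ) : ℂ)) := by
      simp only [← Complex.exp_sum]
      congr 1
      rw [hrr]
      push_cast
      rw [Finset.mul_sum]
      refine Finset.sum_congr rfl fun i _ => ?_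
      rw [Finset.mul_sum]
    rw [hexpprod]
    simp only [← Complex.ofReal_prod]
    rw [← hRr]
    unfold wconst Kc
    ring
  -- absolute value
  have habs : ‖Vdm k u‖ = Rr := by
    rw [hV2, norm_mul, norm_mul, wconst_abs, one_mul]
    rw [mul_comm Complex.I ((rr : ℝ) : ℂ), Complex.norm_exp_ofReal_mul_I, one_mul,
      Complex.norm_of_nonneg hRpos.le]
  have hexpeq : Complex.I * ((rr : ℝ) : ℂ)
      = Complex.I * om n * (((k : ℂ) - 1) * sig k X - k * ((k : ℂ) - 1) ^ 2 / 2) := by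
    have h1 : rr = ((k : ℝ) - 1) * (∑ i : Fin k, u i) / 2 := by
      rw [hrr]
      have : ∑ i : Fin k, ∑ j ∈ Ioi i, (u i + u j) / 2
          = (∑ i : Fin k, ∑ j ∈ Ioi i, (u i + u j)) / 2 := by
        rw [Finset.sum_div]
        exact Finset.sum_congr rfl fun i _ => (Finset.sum_div _ _ _).symm
      rw [this, sum_pairs]
    have h2 : ∑ i : Fin k, u i
        = 2 * Real.pi / n * ((∑ i : Fin k, (X i : ℝ)) - k * ((k : ℝ) - 1) / 2) := sum_xi k n X
    rw [h1, h2]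
    unfold om sig
    push_cast
    ring
  have hne : Vdm k u ≠ 0 := by
    rw [hV2]
    refine mul_ne_zero (mul_ne_zero (wconst_ne k) (Complex.exp_ne_zero _)) ?_
    exact_mod_cast ne_of_gt hRpos
  refine ⟨?_, hne⟩
  rw [habs, hV2, hexpeq]

/-- the embedding `ξ_n` intertwines the continuous Fourier transform on `U(k)`
with the discrete Fourier transform on `B_{k,n}`:
`(1/n^k) Σ_I μ(I)|V(ξ_n(I))|² S_J(ξ_n(I)) = S_J(ξ_n(I_0)) · Φ_n[μ](J^{(n)})`. -/
theorem stmt11 (k n : ℕ) (hk : 1 ≤ k) (hkn : k ≤ n) (J : Fin k → ℤ)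
    (hJdec : ∀ i j : Fin k, i < j → J j < J i)
    (hJwidth : J ⟨0, by omega⟩ - J ⟨k - 1, by omega⟩ < (n : ℤ))
    (Jn : Conf k n)
    (hJn : (Finset.univ.image fun i : Fin k => J i % (n : ℤ)) =
      (Finset.univ.image fun i : Fin k => cv Jn i % (n : ℤ))) :
    ∀ μ : Conf k n → ℂ,
      (1 / (n : ℂ) ^ k) *
          ∑ I : Conf k n, μ I * (((‖Vdm k (xi k n (cv I))‖) ^ 2 : ℝ) : ℂ) *
            SJ k J (xi k n (cv I)) =
        SJ k J (xi k n (I0 k)) *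
          ∑ I : Conf k n,
            ((‖Vdm k (xi k n (cv I))‖ * ‖Vdm k (xi k n (I0 k))‖ /
                (n : ℝ) ^ k : ℝ) : ℂ) *
              SJ k (cv I) (xi k n (cv Jn)) * μ I := by
  intro μ
  have hn0 : 0 < n := le_trans hk hkn
  have hnne : n ≠ 0 := by omega
  -- monotonicity of J
  have hanti : ∀ i j : Fin k, i ≤ j → J j ≤ J i := by
    intro i j hij
    rcases eq_or_lt_of_le hij with h | h
    · rw [h]
    · exact (hJdec i j h).le
  -- injectivity of residues of J
  have hfinj : Function.Injective fun i : Fin k => J i % (n : ℤ) := by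
    have key : ∀ a b : Fin k, a < b → J a % (n : ℤ) ≠ J b % (n : ℤ) := by
      intro a b hab heq
      have h1 : J b < J a := hJdec a b hab
      have ha : J a ≤ J ⟨0, by omega⟩ := hanti ⟨0, by omega⟩ a (by simp [Fin.le_def])
      have hb : J ⟨k - 1, by omega⟩ ≤ J b := by
        refine hanti b ⟨k - 1, by omega⟩ ?_
        simp only [Fin.le_def]
        have := b.isLt
        omega
      have h2 : J a - J b < n := by omega
      have hmod : Int.ModEq (n : ℤ) (J a) (J b) := heq
      obtain ⟨c, hc⟩ := Int.ModEq.dvd hmod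
      have hd : (n : ℤ) ∣ J a - J b := ⟨-c, by rw [mul_neg, ← hc]; ring⟩
      have := Int.le_of_dvd (by omega) hd
      omega
    intro a b heq
    by_contra hne
    rcases lt_or_gt_of_ne hne with h | h
    · exact key a b h heq
    · exact key b a h heq.symm
  -- the permutation matching residues
  have hsurj : ∀ m : Fin k, ∃ i, cv Jn i % (n : ℤ) = J m % (n : ℤ) := by
    intro m
    have hmem : J m % (n : ℤ) ∈ Finset.univ.image fun i : Fin k => cv Jn i % (n : ℤ) := by
      rw [← hJn]; exact Finset.mem_image_of_mem _ (Finset.mem_univ m)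
    obtain ⟨i, _, hi⟩ := Finset.mem_image.mp hmem
    exact ⟨i, hi⟩
  choose σ0 hσ0 using hsurj
  have hσ0inj : Function.Injective σ0 := by
    intro a b hab
    apply hfinj
    show J a % (n : ℤ) = J b % (n : ℤ)
    rw [← hσ0 a, ← hσ0 b, hab]
  let σ : Equiv.Perm (Fin k) := Equiv.ofBijective σ0 (Finite.injective_iff_bijective.mp hσ0inj)
  have hσ : ∀ m, ∃ t : ℤ, J m = cv Jn (σ m) + n * t := by
    intro m
    have h1 : cv Jn (σ m) % (n : ℤ) = J m % (n : ℤ) := hσ0 m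
    have hmod : Int.ModEq (n : ℤ) (cv Jn (σ m)) (J m) := h1
    obtain ⟨t, ht⟩ := Int.ModEq.dvd hmod
    exact ⟨t, by linarith⟩
  -- phase facts
  have hI0dec : ∀ i j : Fin k, i < j → I0 k j < I0 k i := by
    intro i j h
    unfold I0
    have : (i : ℕ) < (j : ℕ) := h
    omega
  have hI0phase := Vdm_phase k n hn0 (I0 k) hI0dec
    (by intro i; unfold I0; have := i.isLt; omega)
    (by intro i; unfold I0; have := i.isLt; omega)
  have hcvJndec : ∀ i j : Fin k, i < j → cv Jn j < cv Jn i := by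
    intro i j h
    have := Jn.2 i j h
    unfold cv
    exact_mod_cast this
  have hJnphase := Vdm_phase k n hn0 (cv Jn) hcvJndec
    (fun i => Int.ofNat_nonneg _)
    (fun i => by unfold cv; exact_mod_cast (Jn.val i).isLt)
  -- expansion of V(xi(Jn))
  have hVJn : Vdm k (xi k n (cv Jn)) =
      Complex.exp (-(Complex.I * om n * ((k : ℂ) - 1) * sig k (I0 k))) *
        Emat k n (I0 k) (cv Jn) := by
    show aJ k (I0 k) (xi k n (cv Jn)) = _
    rw [aJ_xi, Emat_symm]
  have hD0ne : Emat k n (I0 k) (cv Jn) ≠ 0 := by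
    intro h
    exact hJnphase.2 (by rw [hVJn, h, mul_zero])
  -- termwise
  rw [Finset.mul_sum, Finset.mul_sum]
  refine Finset.sum_congr rfl fun I _ => ?_
  have hcvIdec : ∀ i j : Fin k, i < j → cv I j < cv I i := by
    intro i j h
    have := I.2 i j h
    unfold cv
    exact_mod_cast this
  have hIphase := Vdm_phase k n hn0 (cv I) hcvIdec
    (fun i => Int.ofNat_nonneg _)
    (fun i => by unfold cv; exact_mod_cast (I.val i).isLt)
  unfold SJ
  set vI := ‖Vdm k (xi k n (cv I))‖ with hvI
  set vI0 := ‖Vdm k (xi k n (I0 k))‖ with hvI0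
  have hvIne : ((vI : ℝ) : ℂ) ≠ 0 := by
    rw [Complex.ofReal_ne_zero, hvI]
    exact norm_ne_zero_iff.mpr hIphase.2
  have hvI0ne : ((vI0 : ℝ) : ℂ) ≠ 0 := by
    rw [Complex.ofReal_ne_zero, hvI0]
    exact norm_ne_zero_iff.mpr hI0phase.2
  have haJI : aJ k J (xi k n (cv I)) =
      Complex.exp (-(Complex.I * om n * ((k : ℂ) - 1) * sig k J)) * Emat k n (cv I) J :=
    aJ_xi k n (cv I) J
  have hpermI : Emat k n (cv I) J =
      (((Equiv.Perm.sign σ : ℤ)) : ℂ) * Emat k n (cv I) (cv Jn) :=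
    Emat_perm k n σ (cv I) J (cv Jn) hnne hσ
  have haJI0 : aJ k J (xi k n (I0 k)) =
      Complex.exp (-(Complex.I * om n * ((k : ℂ) - 1) * sig k J)) * Emat k n (I0 k) J :=
    aJ_xi k n (I0 k) J
  have hpermI0 : Emat k n (I0 k) J =
      (((Equiv.Perm.sign σ : ℤ)) : ℂ) * Emat k n (I0 k) (cv Jn) :=
    Emat_perm k n σ (I0 k) J (cv Jn) hnne hσ
  have haII : aJ k (cv I) (xi k n (cv Jn)) =
      Complex.exp (-(Complex.I * om n * ((k : ℂ) - 1) * sig k (cv I))) *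
        Emat k n (cv I) (cv Jn) := by
    rw [aJ_xi, Emat_symm]
  rw [haJI, hpermI, haJI0, hpermI0, haII, hVJn, hIphase.1, hI0phase.1]
  push_cast
  have hPQ : Complex.exp (Complex.I * om n * (((k : ℂ) - 1) * sig k (I0 k) -
        (k : ℂ) * ((k : ℂ) - 1) ^ 2 / 2)) *
        Complex.exp (-(Complex.I * om n * ((k : ℂ) - 1) * sig k (I0 k)))
      = Complex.exp (Complex.I * om n * (((k : ℂ) - 1) * sig k (cv I) -
        (k : ℂ) * ((k : ℂ) - 1) ^ 2 / 2)) *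
        Complex.exp (-(Complex.I * om n * ((k : ℂ) - 1) * sig k (cv I))) := by
    rw [← Complex.exp_add, ← Complex.exp_add]
    congr 1
    ring
  have hnkne : ((n : ℂ)) ^ k ≠ 0 := pow_ne_zero _ (by exact_mod_cast hnne)
  field_simp [wconst_ne k, Complex.exp_ne_zero, hvIne, hvI0ne, hD0ne, hnkne]
  have e1 : Complex.exp (Complex.I * om n * (↑k - 1) * (2 * sig k (I0 k) - ↑k * (↑k - 1)) / 2)
      = Complex.exp (Complex.I * om n * (((k : ℂ) - 1) * sig k (I0 k) - (k : ℂ) * ((k : ℂ) - 1) ^ 2 / 2)) := by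
    congr 1; ring
  have e2 : Complex.exp (Complex.I * om n * (↑k - 1) * (sig k (cv I) * 2 - ↑k * (↑k - 1)) / 2)
      = Complex.exp (Complex.I * om n * (((k : ℂ) - 1) * sig k (cv I) - (k : ℂ) * ((k : ℂ) - 1) ^ 2 / 2)) := by
    congr 1; ring
  rw [e1, e2]
  linear_combination (μ I * Emat k n (cv I) (cv Jn)) * hPQ

end Paper
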